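/- Tail estimate for Legendre coefficients under integration: let (a_n)_{n≥0} and (b_n)_{n≥1} be real sequences related by b_n = a_{n-1}/(2n-1) - a_{n+1}/(2n+3) for n ≥ 1. Then for every integer M ≥ 1, Σ_{n=M+1}^{∞} b_n²/(2n+1) ≤ Σ_{n=M}^{M+1} 2 a_n² / ((2n+3)(2n+1)²) + ω Σ_{n=M+2}^{∞} a_n²/(2n+1), where ω = 4/((2M+1)(2M+5)), provided the right-hand side series converges. -/

import Mathlib

private lemma aux1 (x A B : ℝ) (hx : 0 ≤ x) :
    (A / (2*x+1) - B / (2*x+5))^2 / (2*x+3)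
      ≤ 2*A^2 / ((2*x+1)^2*(2*x+3)) + 2*B^2 / ((2*x+5)^2*(2*x+3)) := by
  have h1 : (0:ℝ) < 2*x+1 := by linarith
  have h3 : (0:ℝ) < 2*x+3 := by linarith
  have h5 : (0:ℝ) < 2*x+5 := by linarith
  have key : (A/(2*x+1) - B/(2*x+5))^2 ≤ 2*(A/(2*x+1))^2 + 2*(B/(2*x+5))^2 := by
    nlinarith [sq_nonneg (A/(2*x+1) + B/(2*x+5))]
  calc (A/(2*x+1) - B/(2*x+5))^2/(2*x+3)
      ≤ (2*(A/(2*x+1))^2 + 2*(B/(2*x+5))^2)/(2*x+3) := by gcongr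
    _ = _ := by field_simp [h1.ne', h3.ne', h5.ne']

private lemma aux2 (y q A : ℝ) (hq : 0 ≤ q) (hy : q + 2 ≤ y) :
    2*A^2/((2*y+1)^2*(2*y+3)) + 2*A^2/((2*y+1)^2*(2*y-1))
      ≤ 4/((2*q+1)*(2*q+5)) * (A^2/(2*y+1)) := by
  have h1 : (0:ℝ) < 2*y+1 := by linarith
  have h2 : (0:ℝ) < 2*y-1 := by linarith
  have h3 : (0:ℝ) < 2*y+3 := by linarith
  have hq1 : (0:ℝ) < 2*q+1 := by linarith
  have hq5 : (0:ℝ) < 2*q+5 := by linarith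
  have e1 : 2*A^2/((2*y+1)^2*(2*y+3)) + 2*A^2/((2*y+1)^2*(2*y-1))
      = 4*A^2/((2*y+1)*((2*y-1)*(2*y+3))) := by
    field_simp [h1.ne', h2.ne', h3.ne']
    ring
  have e2 : 4/((2*q+1)*(2*q+5)) * (A^2/(2*y+1))
      = 4*A^2/((2*y+1)*((2*q+1)*(2*q+5))) := by
    rw [div_mul_div_comm]
    ring
  rw [e1, e2]
  have hden : (2*y+1)*((2*q+1)*(2*q+5)) ≤ (2*y+1)*((2*y-1)*(2*y+3)) := by
    apply mul_le_mul_of_nonneg_left _ h1.le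
    nlinarith [mul_nonneg (sub_nonneg.mpr hy) hq, sub_nonneg.mpr hy]
  apply div_le_div_of_nonneg_left (by positivity) (by positivity) ?_ |>.trans_eq rfl
  · exact hden

private lemma aux3 (y A : ℝ) (hy : 2 ≤ y) :
    2*A^2/((2*y+1)^2*(2*y-1)) ≤ A^2/(2*y+1) := by
  have h1 : (0:ℝ) < 2*y+1 := by linarith
  have h2 : (0:ℝ) < 2*y-1 := by linarith
  rw [div_le_div_iff₀ (by positivity) h1]
  have hs : (0:ℝ) ≤ y - 2 := by linarith
  nlinarith [sq_nonneg A, mul_nonneg (sq_nonneg A) hs,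
    mul_nonneg (mul_nonneg (sq_nonneg A) hs) hs,
    mul_nonneg (mul_nonneg (mul_nonneg (sq_nonneg A) hs) hs) hs]

private lemma aux4 (x A : ℝ) (hx : 0 ≤ x) :
    2*A^2/((2*x+1)^2*(2*x+3)) ≤ A^2/(2*x+1) := by
  have h1 : (0:ℝ) < 2*x+1 := by linarith
  rw [div_le_div_iff₀ (by positivity) h1]
  nlinarith [sq_nonneg A, mul_nonneg (sq_nonneg A) hx,
    mul_nonneg (mul_nonneg (sq_nonneg A) hx) hx,
    mul_nonneg (mul_nonneg (mul_nonneg (sq_nonneg A) hx) hx) hx]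

theorem legendre_tail_recursion_estimate (a b : ℕ → ℝ)
    (hrel : ∀ n : ℕ, 1 ≤ n →
      b n = a (n - 1) / (2 * (n : ℝ) - 1) - a (n + 1) / (2 * (n : ℝ) + 3))
    (M : ℕ) (hM : 1 ≤ M)
    (hsum : Summable (fun n : ℕ => a n ^ 2 / (2 * (n : ℝ) + 1))) :
    ∑' k : ℕ, b (k + M + 1) ^ 2 / (2 * ((k + M + 1 : ℕ) : ℝ) + 1)
      ≤ (∑ n ∈ Finset.Icc M (M + 1),
            2 * a n ^ 2 / ((2 * (n : ℝ) + 3) * (2 * (n : ℝ) + 1) ^ 2))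
        + 4 / ((2 * (M : ℝ) + 1) * (2 * (M : ℝ) + 5))
            * ∑' k : ℕ, a (k + M + 2) ^ 2 / (2 * ((k + M + 2 : ℕ) : ℝ) + 1) := by
  set f : ℕ → ℝ := fun k => b (k + M + 1) ^ 2 / (2 * ((k + M + 1 : ℕ) : ℝ) + 1) with hf_def
  set w : ℕ → ℝ := fun k => a (k + M + 2) ^ 2 / (2 * ((k + M + 2 : ℕ) : ℝ) + 1) with hw_def
  set u : ℕ → ℝ := fun k =>
    2 * a (k + M) ^ 2 / ((2 * ((k + M : ℕ) : ℝ) + 1) ^ 2 * (2 * ((k + M : ℕ) : ℝ) + 3)) with hu_def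
  set v : ℕ → ℝ := fun k =>
    2 * a (k + M + 2) ^ 2
      / ((2 * ((k + M + 2 : ℕ) : ℝ) + 1) ^ 2 * (2 * ((k + M + 2 : ℕ) : ℝ) - 1)) with hv_def
  have hy2 : ∀ k : ℕ, (2:ℝ) ≤ ((k + M + 2 : ℕ) : ℝ) := by
    intro k
    have : (2:ℕ) ≤ k + M + 2 := by omega
    exact_mod_cast this
  have hw : Summable w := by
    have h := (summable_nat_add_iff (f := fun n : ℕ => a n ^ 2 / (2 * (n : ℝ) + 1)) (M+2)).mpr hsum
    exact h
  have hwM : Summable (fun k : ℕ => a (k + M) ^ 2 / (2 * ((k + M : ℕ) : ℝ) + 1)) :=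
    (summable_nat_add_iff (f := fun n : ℕ => a n ^ 2 / (2 * (n : ℝ) + 1)) M).mpr hsum
  have hu : Summable u := by
    apply Summable.of_nonneg_of_le (fun k => by positivity) _ hwM
    intro k
    exact aux4 ((k + M : ℕ) : ℝ) (a (k + M)) (Nat.cast_nonneg _)
  have hv : Summable v := by
    apply Summable.of_nonneg_of_le _ _ hw
    · intro k
      have h2 : (0:ℝ) < 2 * ((k + M + 2 : ℕ) : ℝ) - 1 := by linarith [hy2 k]
      positivity
    · intro k
      exact aux3 ((k + M + 2 : ℕ) : ℝ) (a (k + M + 2)) (hy2 k)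
  have hfle : ∀ k, f k ≤ u k + v k := by
    intro k
    have hx : (0:ℝ) ≤ ((k + M : ℕ) : ℝ) := Nat.cast_nonneg _
    have hb : b (k + M + 1)
        = a (k + M) / (2 * ((k + M : ℕ) : ℝ) + 1) - a (k + M + 2) / (2 * ((k + M : ℕ) : ℝ) + 5) := by
      rw [hrel (k + M + 1) (by omega)]
      simp only [Nat.add_sub_cancel]
      push_cast
      ring
    have e1 : f k = (a (k + M) / (2 * ((k + M : ℕ) : ℝ) + 1)
        - a (k + M + 2) / (2 * ((k + M : ℕ) : ℝ) + 5)) ^ 2 / (2 * ((k + M : ℕ) : ℝ) + 3) := by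
      simp only [hf_def]
      rw [hb]
      push_cast
      ring
    have e2 : u k + v k
        = 2 * a (k + M) ^ 2 / ((2 * ((k + M : ℕ) : ℝ) + 1) ^ 2 * (2 * ((k + M : ℕ) : ℝ) + 3))
          + 2 * a (k + M + 2) ^ 2
            / ((2 * ((k + M : ℕ) : ℝ) + 5) ^ 2 * (2 * ((k + M : ℕ) : ℝ) + 3)) := by
      simp only [hu_def, hv_def]
      push_cast
      ring
    rw [e1, e2]
    exact aux1 ((k + M : ℕ) : ℝ) (a (k + M)) (a (k + M + 2)) hx
  have hF : Summable f := by
    apply Summable.of_nonneg_of_le (fun k => by positivity) hfle (hu.add hv)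
  have hu2 : Summable (fun k => u (k + 2)) := (summable_nat_add_iff 2).mpr hu
  have hstep : ∀ k, u (k + 2) + v k
      ≤ 4 / ((2 * (M : ℝ) + 1) * (2 * (M : ℝ) + 5)) * w k := by
    intro k
    have hq : (0:ℝ) ≤ (M:ℝ) := Nat.cast_nonneg _
    have hy : (M:ℝ) + 2 ≤ ((k + M + 2 : ℕ) : ℝ) := by push_cast; linarith [(Nat.cast_nonneg k : (0:ℝ) ≤ k)]
    have hidx : k + 2 + M = k + M + 2 := by omega
    have e : u (k + 2) + v k
        = 2 * a (k + M + 2) ^ 2 / ((2 * ((k + M + 2 : ℕ) : ℝ) + 1) ^ 2 * (2 * ((k + M + 2 : ℕ) : ℝ) + 3))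
          + 2 * a (k + M + 2) ^ 2 / ((2 * ((k + M + 2 : ℕ) : ℝ) + 1) ^ 2 * (2 * ((k + M + 2 : ℕ) : ℝ) - 1)) := by
      simp only [hu_def, hv_def, hidx]
    rw [e]
    exact aux2 ((k + M + 2 : ℕ) : ℝ) (M : ℝ) (a (k + M + 2)) hq hy
  calc ∑' k, f k
      ≤ ∑' k, (u k + v k) := Summable.tsum_le_tsum hfle hF (hu.add hv)
    _ = (∑' k, u k) + ∑' k, v k := Summable.tsum_add hu hv
    _ = ((∑ i ∈ Finset.range 2, u i) + ∑' k, u (k + 2)) + ∑' k, v k := by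
        rw [Summable.sum_add_tsum_nat_add 2 hu]
    _ = (∑ i ∈ Finset.range 2, u i) + ∑' k, (u (k + 2) + v k) := by
        rw [Summable.tsum_add hu2 hv, add_assoc]
    _ ≤ (∑ i ∈ Finset.range 2, u i)
        + ∑' k, 4 / ((2 * (M : ℝ) + 1) * (2 * (M : ℝ) + 5)) * w k := by
        exact add_le_add_right (Summable.tsum_le_tsum hstep (hu2.add hv) (hw.mul_left _)) _
    _ = (∑ i ∈ Finset.range 2, u i)
        + 4 / ((2 * (M : ℝ) + 1) * (2 * (M : ℝ) + 5)) * ∑' k, w k := by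
        rw [tsum_mul_left]
    _ = _ := by
        congr 1
        rw [Finset.sum_range_succ, Finset.sum_range_one,
          show M + 1 = M + 1 from rfl,
          Finset.sum_Icc_succ_top (by omega : M ≤ M + 1), Finset.Icc_self,
          Finset.sum_singleton]
        simp only [hu_def, Nat.zero_add, show 1 + M = M + 1 from by omega]
        push_cast
        ring
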